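/- Let n ≥ 1 be a natural number. In ℓ∞₄, let y = (−1, 0, n, 2n) and x = (0, 1, n+1, 0). Then the distance from x to the complex linear span of y equals 2(n+1)/3; that is, the infimum over μ ∈ ℂ of ‖x − μ·y‖ equals 2(n+1)/3. (This is the norm of x + span{y} in the operator space quotient ℓ∞₄/span{y}.) -/

import Mathlib

/-- In `ℓ∞₄ = (Fin 4 → ℂ)` with the sup norm, for `y = (−1, 0, n, 2n)` and
`x = (0, 1, n+1, 0)` the distance from `x` to `span ℂ {y}` equals `2(n+1)/3`. -/
theorem stmt7 (n : ℕ) (hn : 1 ≤ n) :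
    (⨅ μ : ℂ, ‖(![0, 1, (n : ℂ) + 1, 0] : Fin 4 → ℂ)
        - μ • (![(-1 : ℂ), 0, (n : ℂ), 2 * (n : ℂ)] : Fin 4 → ℂ)‖)
      = 2 * ((n : ℝ) + 1) / 3 := by
  have hn' : (1:ℝ) ≤ (n:ℝ) := by exact_mod_cast hn
  have hn0 : (0:ℝ) < (n:ℝ) := by linarith
  have hne : (n:ℝ) ≠ 0 := ne_of_gt hn0
  have hc : (0:ℝ) ≤ 2 * ((n : ℝ) + 1) / 3 := by positivity
  set r : ℝ := ((n:ℝ)+1)/(3*(n:ℝ)) with hr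
  have hr0 : 0 ≤ r := by positivity
  have hrc : r ≤ 2 * ((n : ℝ) + 1) / 3 := by
    rw [hr, div_le_div_iff₀ (by positivity) (by norm_num)]
    nlinarith
  apply le_antisymm
  · refine le_trans (ciInf_le ⟨0, ?_⟩ ((r : ℝ) : ℂ)) ?_
    · rintro x ⟨μ, rfl⟩; exact norm_nonneg _
    · rw [pi_norm_le_iff_of_nonneg hc]
      intro i
      fin_cases i <;> simp
      · rw [abs_of_nonneg hr0]; exact hrc
      · linarith
      · rw [show ((n:ℂ) + 1 - (r:ℂ) * (n:ℂ)) = (((n:ℝ) + 1 - r * n : ℝ) : ℂ) by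
          push_cast; ring]
        rw [Complex.norm_real, Real.norm_eq_abs]
        have : (n:ℝ) + 1 - r * n = 2 * ((n:ℝ)+1) / 3 := by
          rw [hr]; field_simp; ring
        rw [this, abs_of_nonneg hc]
      · rw [abs_of_nonneg hr0, hr]
        rw [div_mul_eq_mul_div, div_le_div_iff₀ (by positivity) (by norm_num)]
        ring_nf
        nlinarith
  · refine le_ciInf fun μ => ?_
    set v := (![0, 1, (n : ℂ) + 1, 0] : Fin 4 → ℂ)
        - μ • (![(-1 : ℂ), 0, (n : ℂ), 2 * (n : ℂ)] : Fin 4 → ℂ) with hv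
    have h2 : ‖v 2‖ ≤ ‖v‖ := norm_le_pi_norm v 2
    have h3 : ‖v 3‖ ≤ ‖v‖ := norm_le_pi_norm v 3
    have hv2 : v 2 = ((n : ℂ) + 1) - μ * n := by simp [hv]
    have hv3 : ‖v 3‖ = 2 * (‖μ‖ * n) := by
      simp [hv, norm_mul]
      ring
    have htri : (n:ℝ) + 1 - ‖μ‖ * n ≤ ‖v 2‖ := by
      have h := norm_sub_norm_le ((n : ℂ) + 1) (μ * n)
      rw [← hv2] at h
      have h1 : ‖(n : ℂ) + 1‖ = (n:ℝ) + 1 := by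
        rw [show (n:ℂ) + 1 = (((n:ℝ) + 1 : ℝ) : ℂ) by push_cast; ring,
          Complex.norm_real, Real.norm_eq_abs, abs_of_nonneg (by positivity)]
      have h2' : ‖μ * (n:ℂ)‖ = ‖μ‖ * n := by
        rw [norm_mul, Complex.norm_natCast]
      linarith
    rw [hv3] at h3
    linarith
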